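/- Let (G, δ) be a scalable group equipped with a compatible distance d. Suppose that the right translation R_x : G → G, R_x(y) = yx, is continuous for every x ∈ G, and that the subgroup of G generated by the first layer V_1(G) is dense in G. Then the dilation map δ : ℝ × G → G is Cauchy-continuous: it is continuous, and whenever (λ_n) is a Cauchy sequence in ℝ and (x_n) is a Cauchy sequence in G, the sequence (δ_{λ_n}(x_n)) is Cauchy in G. -/

import Mathlib

open Filter Topology

theorem stmt13 {G : Type*} [Group G] [MetricSpace G]
    (δ : ℝ → G → G)
    (hmul : ∀ (l : ℝ) (x y : G), δ l (x * y) = δ l x * δ l y)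
    (h0 : ∀ x : G, δ 0 x = 1)
    (hcomp : ∀ (l m : ℝ) (x : G), δ l (δ m x) = δ (l * m) x)
    (hbij : ∀ l : ℝ, l ≠ 0 → Function.Bijective (δ l))
    (hleft : ∀ x y z : G, dist (x * y) (x * z) = dist y z)
    (hdil : ∀ (l : ℝ) (x y : G), dist (δ l x) (δ l y) = |l| * dist x y)
    (hR : ∀ x : G, Continuous fun y : G => y * x)
    (hdense : Dense ((Subgroup.closure {x : G | ∀ t s : ℝ, δ (t + s) x = δ t x * δ s x} :
      Subgroup G) : Set G)) :
    Continuous (fun p : ℝ × G => δ p.1 p.2) ∧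
      ∀ (l : ℕ → ℝ) (u : ℕ → G), CauchySeq l → CauchySeq u →
        CauchySeq fun n => δ (l n) (u n) := by
  set S : Set G := {x : G | ∀ t s : ℝ, δ (t + s) x = δ t x * δ s x} with hS
  -- δ l 1 = 1
  have hone : ∀ l : ℝ, δ l 1 = 1 := by
    intro l
    have h := hmul l 1 1
    rw [mul_one] at h
    exact left_eq_mul.mp h
  -- inversion is isometric at 1 : dist z⁻¹ 1 = dist z 1
  have hinv1 : ∀ z : G, dist z⁻¹ 1 = dist z 1 := by
    intro z
    have h := hleft z z⁻¹ 1
    rw [mul_inv_cancel, mul_one] at h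
    rw [← h, dist_comm]
  -- inversion continuous
  have hinvcont : Continuous fun a : G => a⁻¹ := by
    rw [continuous_iff_continuousAt]
    intro b
    have hg : Tendsto (fun a : G => (b⁻¹ * a)⁻¹) (𝓝 b) (𝓝 1) := by
      rw [tendsto_iff_dist_tendsto_zero]
      have heq : (fun a : G => dist (b⁻¹ * a)⁻¹ 1) = fun a : G => dist a b := by
        funext a
        rw [hinv1]
        have h := hleft b⁻¹ a b
        rw [inv_mul_cancel] at h
        rw [h]
      rw [heq]
      have : Tendsto (fun a : G => dist a b) (𝓝 b) (𝓝 (dist b b)) :=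
        tendsto_id.dist tendsto_const_nhds
      simpa using this
    have hcomp2 : Tendsto (fun a : G => (b⁻¹ * a)⁻¹ * b⁻¹) (𝓝 b) (𝓝 (1 * b⁻¹)) :=
      ((hR b⁻¹).tendsto 1).comp hg
    rw [one_mul] at hcomp2
    have heq : (fun a : G => a⁻¹) = fun a : G => (b⁻¹ * a)⁻¹ * b⁻¹ := by
      funext a; rw [mul_inv_rev, inv_inv, mul_assoc, mul_inv_cancel, mul_one]
    show Tendsto (fun a : G => a⁻¹) (𝓝 b) (𝓝 b⁻¹)
    rw [heq]
    exact hcomp2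
  -- pointwise product of continuous maps ℝ → G is continuous
  have hmc : ∀ (f g : ℝ → G), Continuous f → Continuous g →
      Continuous (fun t => f t * g t) := by
    intro f g hf hg
    rw [continuous_iff_continuousAt]
    intro t₀
    have hA : Tendsto (fun t => f t * g t₀) (𝓝 t₀) (𝓝 (f t₀ * g t₀)) :=
      ((hR (g t₀)).tendsto (f t₀)).comp (hf.tendsto t₀)
    unfold ContinuousAt
    rw [tendsto_iff_dist_tendsto_zero]
    have hbound : ∀ t, dist (f t * g t) (f t₀ * g t₀) ≤
        dist (g t) (g t₀) + dist (f t * g t₀) (f t₀ * g t₀) := by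
      intro t
      calc dist (f t * g t) (f t₀ * g t₀)
          ≤ dist (f t * g t) (f t * g t₀) + dist (f t * g t₀) (f t₀ * g t₀) :=
            dist_triangle _ _ _
        _ = dist (g t) (g t₀) + dist (f t * g t₀) (f t₀ * g t₀) := by rw [hleft]
    apply squeeze_zero (fun t => dist_nonneg) hbound
    have h1 : Tendsto (fun t => dist (g t) (g t₀)) (𝓝 t₀) (𝓝 0) := by
      have := (hg.tendsto t₀).dist (tendsto_const_nhds (α := ℝ) (x := g t₀))
      simpa using this
    have h2 : Tendsto (fun t => dist (f t * g t₀) (f t₀ * g t₀)) (𝓝 t₀) (𝓝 0) := by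
      have := hA.dist (tendsto_const_nhds (α := ℝ) (x := f t₀ * g t₀))
      simpa using this
    simpa using h1.add h2
  -- for y ∈ S, t ↦ δ t y is Lipschitz
  have hlip : ∀ y ∈ S, ∀ t s : ℝ, dist (δ t y) (δ s y) = |t - s| * dist y 1 := by
    intro y hy t s
    have h1 : δ t y = δ s y * δ (t - s) y := by
      have := hy s (t - s)
      rw [add_sub_cancel] at this
      exact this
    calc dist (δ t y) (δ s y) = dist (δ s y * δ (t - s) y) (δ s y * 1) := by
          rw [← h1, mul_one]
      _ = dist (δ (t - s) y) 1 := hleft _ _ _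
      _ = dist (δ (t - s) y) (δ (t - s) 1) := by rw [hone]
      _ = |t - s| * dist y 1 := hdil _ _ _
  -- for y in the closure subgroup, t ↦ δ t y is continuous
  have Hcont : ∀ y ∈ Subgroup.closure S, Continuous fun t : ℝ => δ t y := by
    intro y hy
    induction hy using Subgroup.closure_induction with
    | mem x hx =>
      apply LipschitzWith.continuous (K := ⟨dist x 1, dist_nonneg⟩)
      apply LipschitzWith.of_dist_le_mul
      intro t s
      rw [hlip x hx t s, Real.dist_eq]
      simp [mul_comm]
      exact le_rfl
    | one => simp only [hone]; exact continuous_const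
    | mul a b ha hb iha ihb =>
      simp only [hmul]
      exact hmc _ _ iha ihb
    | inv a ha iha =>
      have : (fun t : ℝ => δ t a⁻¹) = fun t : ℝ => (δ t a)⁻¹ := by
        funext t
        apply eq_inv_of_mul_eq_one_left
        rw [← hmul, inv_mul_cancel, hone]
      rw [this]
      exact hinvcont.comp iha
  constructor
  · -- continuity of the joint map
    rw [continuous_iff_continuousAt]
    rintro ⟨l₀, x₀⟩
    rw [Metric.continuousAt_iff]
    intro ε hε
    set c : ℝ := |l₀| + 1 with hc
    have hcpos : 0 < c := by positivity
    set r : ℝ := ε / (4 * c) with hr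
    have hrpos : 0 < r := by positivity
    -- pick y in the dense subgroup close to x₀
    obtain ⟨y, hyH, hyd⟩ := Metric.mem_closure_iff.mp (hdense x₀) r hrpos
    have hcy := Hcont y hyH
    obtain ⟨d₁, hd₁pos, hd₁⟩ := Metric.continuousAt_iff.mp (hcy.continuousAt (x := l₀)) (ε / 4)
      (by positivity)
    refine ⟨min d₁ (min 1 r), by positivity, ?_⟩
    rintro ⟨l, x⟩ hp
    simp only [Prod.dist_eq, max_lt_iff] at hp
    obtain ⟨hpl, hpx⟩ := hp
    have hl1 : dist l l₀ < d₁ := lt_of_lt_of_le hpl (min_le_left _ _)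
    have hl2 : dist l l₀ < 1 := lt_of_lt_of_le hpl ((min_le_right _ _).trans (min_le_left _ _))
    have hx2 : dist x x₀ < r := lt_of_lt_of_le hpx ((min_le_right _ _).trans (min_le_right _ _))
    have hlabs : |l| ≤ c := by
      have : |l - l₀| < 1 := by rwa [Real.dist_eq] at hl2
      calc |l| = |l - l₀ + l₀| := by ring_nf
        _ ≤ |l - l₀| + |l₀| := abs_add_le _ _
        _ ≤ c := by rw [hc]; linarith
    have hl0abs : |l₀| ≤ c := by rw [hc]; linarith
    have key : ∀ m : ℝ, ∀ a b : G, |m| ≤ c → dist a b < r →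
        dist (δ m a) (δ m b) < ε / 4 := by
      intro m a b hm hab
      rw [hdil]
      calc |m| * dist a b ≤ c * dist a b := by
            apply mul_le_mul_of_nonneg_right hm dist_nonneg
        _ < c * r := by exact mul_lt_mul_of_pos_left hab hcpos
        _ = ε / 4 := by rw [hr]; field_simp
    have t1 : dist (δ l x) (δ l x₀) < ε / 4 := key l x x₀ hlabs hx2
    have t2 : dist (δ l x₀) (δ l y) < ε / 4 := by
      apply key l x₀ y hlabs
      exact hyd
    have t3 : dist (δ l y) (δ l₀ y) < ε / 4 := hd₁ hl1
    have t4 : dist (δ l₀ y) (δ l₀ x₀) < ε / 4 := by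
      apply key l₀ y x₀ hl0abs
      rwa [dist_comm]
    calc dist (δ l x) (δ l₀ x₀)
        ≤ dist (δ l x) (δ l x₀) + dist (δ l x₀) (δ l y) + dist (δ l y) (δ l₀ y)
            + dist (δ l₀ y) (δ l₀ x₀) := by
          have h1 := dist_triangle4 (δ l x) (δ l x₀) (δ l y) (δ l₀ y)
          have h2 := dist_triangle (δ l x) (δ l₀ y) (δ l₀ x₀)
          linarith
      _ < ε := by linarith
  · -- Cauchy sequences
    intro l u hl hu
    obtain ⟨R, hRpos, hRb⟩ := cauchySeq_bdd hl
    set M : ℝ := |l 0| + R with hM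
    have hMpos : 0 < M := by positivity
    have hlM : ∀ n, |l n| ≤ M := by
      intro n
      have := hRb n 0
      rw [Real.dist_eq] at this
      calc |l n| = |l n - l 0 + l 0| := by ring_nf
        _ ≤ |l n - l 0| + |l 0| := abs_add_le _ _
        _ ≤ M := by rw [hM]; linarith
    obtain ⟨a, hla⟩ := cauchySeq_tendsto_of_complete hl
    rw [Metric.cauchySeq_iff]
    intro ε hε
    set r : ℝ := ε / (5 * M) with hr
    have hrpos : 0 < r := by positivity
    obtain ⟨N₁, hN₁⟩ := Metric.cauchySeq_iff.mp hu r hrpos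
    obtain ⟨y, hyH, hyd⟩ := Metric.mem_closure_iff.mp (hdense (u N₁)) r hrpos
    have hv : CauchySeq (fun n => δ (l n) y) :=
      (((Hcont y hyH).tendsto a).comp hla).cauchySeq
    obtain ⟨N₂, hN₂⟩ := Metric.cauchySeq_iff.mp hv (ε / 5) (by positivity)
    refine ⟨max N₁ N₂, ?_⟩
    intro m hm n hn
    have hmN₁ : N₁ ≤ m := le_trans (le_max_left _ _) hm
    have hnN₁ : N₁ ≤ n := le_trans (le_max_left _ _) hn
    have key : ∀ k : ℕ, ∀ a b : G, dist a b < r → dist (δ (l k) a) (δ (l k) b) < ε / 5 := by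
      intro k a b hab
      rw [hdil]
      calc |l k| * dist a b ≤ M * dist a b :=
            mul_le_mul_of_nonneg_right (hlM k) dist_nonneg
        _ < M * r := mul_lt_mul_of_pos_left hab hMpos
        _ = ε / 5 := by rw [hr]; field_simp
    have t1 : dist (δ (l m) (u m)) (δ (l m) (u N₁)) < ε / 5 :=
      key m _ _ (hN₁ m hmN₁ N₁ le_rfl)
    have t2 : dist (δ (l m) (u N₁)) (δ (l m) y) < ε / 5 := key m _ _ hyd
    have t3 : dist (δ (l m) y) (δ (l n) y) < ε / 5 :=
      hN₂ m (le_trans (le_max_right _ _) hm) n (le_trans (le_max_right _ _) hn)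
    have t4 : dist (δ (l n) y) (δ (l n) (u N₁)) < ε / 5 := by
      apply key n
      rwa [dist_comm]
    have t5 : dist (δ (l n) (u N₁)) (δ (l n) (u n)) < ε / 5 :=
      key n _ _ (hN₁ N₁ le_rfl n hnN₁)
    calc dist (δ (l m) (u m)) (δ (l n) (u n))
        ≤ dist (δ (l m) (u m)) (δ (l m) (u N₁)) + dist (δ (l m) (u N₁)) (δ (l m) y)
            + dist (δ (l m) y) (δ (l n) y) + dist (δ (l n) y) (δ (l n) (u N₁))
            + dist (δ (l n) (u N₁)) (δ (l n) (u n)) := by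
          have h4 := dist_triangle4 (δ (l m) (u m)) (δ (l m) (u N₁)) (δ (l m) y) (δ (l n) y)
          have h2 := dist_triangle (δ (l n) y) (δ (l n) (u N₁)) (δ (l n) (u n))
          have h1 := dist_triangle (δ (l m) (u m)) (δ (l n) y) (δ (l n) (u n))
          linarith
      _ < ε := by linarith
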